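/- Let F : ℂ → Matrix (Fin n) (Fin n) ℂ be analytic. Let y₁ be a left eigenvector for eigenvalue λ₁ (y₁ᴴF(λ₁)=0) and x₂ a right eigenvector for eigenvalue λ₂ ≠ λ₁ (F(λ₂)x₂=0). For vectors w, scalars φ, and ε ∈ ℂ, set θ = λ₂ + εφ and v = x₂ + εw. Then y₁ᴴ F[λ₁,θ] v = C·ε·(y₁ᴴ F'(λ₁) x₁) + O(ε²) as ε → 0, where C = (y₁ᴴ F(λ₂) w + φ · y₁ᴴ F'(λ₂) x₂)/((λ₂−λ₁)(y₁ᴴF'(λ₁)x₁)), provided y₁ᴴ F'(λ₁) x₁ ≠ 0. Equivalently, y₁ᴴ(F(λ₁) − F(θ))v = −(y₁ᴴF(λ₂)w + φ y₁ᴴF'(λ₂)x₂)ε + O(ε²). -/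

import Mathlib

open Matrix Filter Asymptotics

lemma taylor2_aux {h : ℂ → ℂ} {c : ℂ} (ha : AnalyticAt ℂ h 0) (h0 : h 0 = 0)
    (hd : HasDerivAt h c 0) : (fun ε => h ε - c * ε) =O[nhds (0 : ℂ)] fun ε => ε ^ 2 := by
  obtain ⟨p, hp⟩ := ha
  have hO := hp.isBigO_sub_partialSum_pow 2
  have hc0 : p.coeff 0 = 0 := by
    rw [FormalMultilinearSeries.coeff, hp.coeff_zero, h0]
  have hc1 : p.coeff 1 = c := by
    have h1 := hp.deriv
    rw [hd.deriv] at h1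
    simp only [FormalMultilinearSeries.coeff]
    exact h1.symm
  have heq : ∀ y : ℂ, h (0 + y) - p.partialSum 2 y = h y - c * y := by
    intro y
    simp [FormalMultilinearSeries.partialSum, Finset.sum_range_succ,
      FormalMultilinearSeries.apply_eq_pow_smul_coeff, hc0, hc1, smul_eq_mul, mul_comm]
  calc (fun ε => h ε - c * ε) =O[nhds (0:ℂ)] (fun y => ‖y‖ ^ 2) := by
        simpa only [heq] using hO
    _ =O[nhds (0:ℂ)] fun ε => ε ^ 2 := by
        apply IsBigO.of_norm_right
        simp only [norm_pow]
        exact isBigO_refl _ _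

theorem stmt_3 (n : ℕ) (F F' : ℂ → Matrix (Fin n) (Fin n) ℂ)
    (hF : ∀ (z : ℂ) (i j : Fin n), AnalyticAt ℂ (fun t => F t i j) z)
    (hF' : ∀ (z : ℂ) (i j : Fin n), HasDerivAt (fun t => F t i j) (F' z i j) z)
    (lam1 lam2 : ℂ) (hne : lam2 ≠ lam1)
    (y1 x1 x2 w : Fin n → ℂ) (phi : ℂ)
    (hy1 : y1 ≠ 0) (hx1 : x1 ≠ 0) (hx2 : x2 ≠ 0)
    (hly : Matrix.vecMul (star y1) (F lam1) = 0)
    (hrx1 : (F lam1).mulVec x1 = 0)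
    (hrx2 : (F lam2).mulVec x2 = 0)
    (hsimple : star y1 ⬝ᵥ (F' lam1).mulVec x1 ≠ 0) :
    (fun ε : ℂ =>
        star y1 ⬝ᵥ
            ((lam1 - (lam2 + ε * phi))⁻¹ • (F lam1 - F (lam2 + ε * phi))).mulVec
              (x2 + ε • w) / (star y1 ⬝ᵥ (F' lam1).mulVec x1) -
          (star y1 ⬝ᵥ (F lam2).mulVec w + phi * (star y1 ⬝ᵥ (F' lam2).mulVec x2)) /
              ((lam2 - lam1) * (star y1 ⬝ᵥ (F' lam1).mulVec x1)) * ε)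
      =O[nhds (0 : ℂ)] (fun ε => ε ^ 2) ∧
    (fun ε : ℂ =>
        star y1 ⬝ᵥ (F lam1 - F (lam2 + ε * phi)).mulVec (x2 + ε • w) +
          (star y1 ⬝ᵥ (F lam2).mulVec w + phi * (star y1 ⬝ᵥ (F' lam2).mulVec x2)) * ε)
      =O[nhds (0 : ℂ)] (fun ε => ε ^ 2) := by
  set D : ℂ := star y1 ⬝ᵥ (F' lam1).mulVec x1 with hDdef
  set c : ℂ := star y1 ⬝ᵥ (F lam2).mulVec w + phi * (star y1 ⬝ᵥ (F' lam2).mulVec x2) with hcdef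
  set h : ℂ → ℂ := fun ε => star y1 ⬝ᵥ (F (lam2 + ε * phi)).mulVec (x2 + ε • w) with hhdef
  have hzero : ∀ v : Fin n → ℂ, star y1 ⬝ᵥ (F lam1).mulVec v = 0 := by
    intro v; rw [dotProduct_mulVec, hly, zero_dotProduct]
  have h0 : h 0 = 0 := by
    simp [hhdef, hrx2]
  -- representation of h as explicit finite sums
  have hrepr : h = fun ε => ∑ i, star y1 i * ∑ j, F (lam2 + ε * phi) i j * (x2 j + ε * w j) := by
    funext ε
    simp [hhdef, dotProduct, mulVec, smul_eq_mul]
  have haff : ∀ ε₀ : ℂ, HasDerivAt (fun ε : ℂ => lam2 + ε * phi) phi ε₀ := by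
    intro ε₀
    simpa using ((hasDerivAt_id ε₀).mul_const phi).const_add lam2
  have hent : ∀ i j, HasDerivAt (fun ε : ℂ => F (lam2 + ε * phi) i j) (phi * F' lam2 i j) 0 := by
    intro i j
    have h2 := (hF' (lam2 + 0 * phi) i j).comp 0 (haff 0)
    simpa [mul_comm, Function.comp_def] using h2
  have ha : AnalyticAt ℂ h 0 := by
    rw [hrepr]
    apply Finset.analyticAt_fun_sum
    intro i _
    apply analyticAt_const.mul
    apply Finset.analyticAt_fun_sum
    intro j _
    have haffA : AnalyticAt ℂ (fun ε : ℂ => lam2 + ε * phi) 0 :=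
      analyticAt_const.add (analyticAt_id.mul analyticAt_const)
    have hcomp : AnalyticAt ℂ ((fun t => F t i j) ∘ (fun ε : ℂ => lam2 + ε * phi)) 0 := by
      apply AnalyticAt.comp _ haffA
      simpa using hF (lam2 + 0 * phi) i j
    exact hcomp.mul (analyticAt_const.add (analyticAt_id.mul analyticAt_const))
  have hceq : c = ∑ i, star y1 i * ∑ j, (phi * F' lam2 i j * x2 j + F lam2 i j * w j) := by
    rw [hcdef]
    simp only [dotProduct, mulVec, Finset.mul_sum]
    rw [← Finset.sum_add_distrib]
    apply Finset.sum_congr rfl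
    intro i _
    rw [← Finset.sum_add_distrib]
    apply Finset.sum_congr rfl
    intro j _
    ring
  have hd : HasDerivAt h c 0 := by
    rw [hrepr, hceq]
    apply HasDerivAt.fun_sum
    intro i _
    apply HasDerivAt.const_mul
    apply HasDerivAt.fun_sum
    intro j _
    have hb : HasDerivAt (fun ε : ℂ => x2 j + ε * w j) (w j) 0 := by
      simpa using ((hasDerivAt_id (0:ℂ)).mul_const (w j)).const_add (x2 j)
    simpa using (hent i j).fun_mul hb
  have H : (fun ε => h ε - c * ε) =O[nhds (0 : ℂ)] fun ε => ε ^ 2 := taylor2_aux ha h0 hd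
  -- the dot product with the difference matrix equals -h ε
  have hg : ∀ ε : ℂ, star y1 ⬝ᵥ (F lam1 - F (lam2 + ε * phi)).mulVec (x2 + ε • w) = -(h ε) := by
    intro ε
    rw [Matrix.sub_mulVec, dotProduct_sub, hzero, hhdef]
    ring
  have hlam12 : lam1 - lam2 ≠ 0 := sub_ne_zero.mpr (Ne.symm hne)
  have hlam21 : lam2 - lam1 ≠ 0 := sub_ne_zero.mpr hne
  constructor
  · -- first goal
    have htend : Tendsto (fun ε : ℂ => lam1 - (lam2 + ε * phi)) (nhds 0) (nhds (lam1 - lam2)) := by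
      have : Continuous (fun ε : ℂ => lam1 - (lam2 + ε * phi)) := by continuity
      simpa using this.tendsto 0
    have hev : ∀ᶠ ε : ℂ in nhds 0, lam1 - (lam2 + ε * phi) ≠ 0 :=
      htend.eventually_ne hlam12
    -- eventual equality with an explicit form
    have heq : (fun ε : ℂ =>
        star y1 ⬝ᵥ ((lam1 - (lam2 + ε * phi))⁻¹ • (F lam1 - F (lam2 + ε * phi))).mulVec
              (x2 + ε • w) / D - c / ((lam2 - lam1) * D) * ε) =ᶠ[nhds 0]
        (fun ε : ℂ => (-(lam1 - lam2) * (h ε - c * ε) - c * phi * ε ^ 2) *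
          ((lam1 - (lam2 + ε * phi)) * ((lam1 - lam2) * D))⁻¹) := by
      filter_upwards [hev] with ε hε
      rw [Matrix.smul_mulVec, dotProduct_smul, smul_eq_mul, hg ε]
      field_simp
      ring
    apply IsBigO.congr' _ heq.symm EventuallyEq.rfl
    have hnum : (fun ε : ℂ => -(lam1 - lam2) * (h ε - c * ε) - c * phi * ε ^ 2)
        =O[nhds (0:ℂ)] fun ε => ε ^ 2 :=
      (H.const_mul_left _).sub ((isBigO_refl (fun ε : ℂ => ε ^ 2) _).const_mul_left (c * phi))
    have hbound : (fun ε : ℂ => ((lam1 - (lam2 + ε * phi)) * ((lam1 - lam2) * D))⁻¹)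
        =O[nhds (0:ℂ)] (fun _ => (1 : ℂ)) := by
      have ht2 : Tendsto (fun ε : ℂ => ((lam1 - (lam2 + ε * phi)) * ((lam1 - lam2) * D))⁻¹)
          (nhds 0) (nhds (((lam1 - lam2) * ((lam1 - lam2) * D))⁻¹)) := by
        apply Tendsto.inv₀
        · exact (htend.mul tendsto_const_nhds)
        · exact mul_ne_zero hlam12 (mul_ne_zero hlam12 hsimple)
      exact ht2.isBigO_one ℂ
    simpa using hnum.mul hbound
  · -- second goal
    have : (fun ε : ℂ =>
        star y1 ⬝ᵥ (F lam1 - F (lam2 + ε * phi)).mulVec (x2 + ε • w) + c * ε) =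
        fun ε => -(h ε - c * ε) := by
      funext ε
      rw [hg ε]
      ring
    rw [this]
    exact H.neg_left
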